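/- The number of binary strings of even length m ≥ 2 with b_1 = b_m = 1, no two consecutive zeros, and the minimum possible number of ones among such strings, equals m/2. -/
import Mathlib

/-- The number of ones in a binary string `b : Fin m → Bool`. -/
def ones {m : ℕ} (b : Fin m → Bool) : ℕ :=
  (Finset.univ.filter fun j => b j = true).card

/-- A valid string: `b_1 = b_m = 1` and no two consecutive zeros. -/
def Valid (m : ℕ) (hm : 2 ≤ m) (b : Fin m → Bool) : Prop :=
  b ⟨0, by omega⟩ = true ∧ b ⟨m - 1, by omega⟩ = true ∧
    ∀ i : ℕ, ∀ h : i + 1 < m, ¬(b ⟨i, by omega⟩ = false ∧ b ⟨i + 1, h⟩ = false)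

/-- The candidate minimal strings `1(01)^p(10)^q1`. -/
def Fstr (m p : ℕ) : Fin m → Bool := fun i => decide (i.val % 2 = 0 ↔ i.val ≤ 2 * p)

lemma card_eq_of_bij {m k : ℕ} (P : Fin m → Bool) (g : Fin k → Fin m)
    (hinj : Function.Injective g) (hmem : ∀ j, P (g j) = true)
    (hsurj : ∀ i, P i = true → ∃ j, g j = i) :
    (Finset.univ.filter fun i => P i = true).card = k := by
  have himg : (Finset.univ.filter fun i => P i = true) = Finset.image g Finset.univ := by
    ext i
    simp only [Finset.mem_filter, Finset.mem_image, Finset.mem_univ, true_and]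
    constructor
    · exact fun h => hsurj i h
    · rintro ⟨j, rfl⟩; exact hmem j
  rw [himg, Finset.card_image_of_injective _ hinj, Finset.card_univ, Fintype.card_fin]

lemma downclosed_mem_iff {D : Finset ℕ} {N : ℕ} (hsub : D ⊆ Finset.Icc 1 N)
    (hdc : ∀ j ∈ D, ∀ i, 1 ≤ i → i ≤ j → i ∈ D) :
    ∀ k, 1 ≤ k → (k ∈ D ↔ k ≤ D.card) := by
  intro k hk
  constructor
  · intro hkD
    have hsub2 : Finset.Icc 1 k ⊆ D := by
      intro i hi
      rw [Finset.mem_Icc] at hi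
      exact hdc k hkD i hi.1 hi.2
    have := Finset.card_le_card hsub2
    rw [Nat.card_Icc] at this
    omega
  · intro hkc
    by_contra hkD
    have hDsub : D ⊆ Finset.Icc 1 (k - 1) := by
      intro j hj
      have h1 := Finset.mem_Icc.mp (hsub hj)
      rw [Finset.mem_Icc]
      rcases le_or_gt k j with h | h
      · exact absurd (hdc j hj k hk h) hkD
      · omega
    have := Finset.card_le_card hDsub
    rw [Nat.card_Icc] at this
    omega

lemma validF {m : ℕ} (hm : 2 ≤ m) (he : m % 2 = 0) {p : ℕ} (hp : 2 * p + 2 ≤ m) :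
    Valid m hm (Fstr m p) := by
  refine ⟨by simp [Fstr], ?_, ?_⟩
  · simp only [Fstr, decide_eq_true_iff]
    omega
  · intro i h hcon
    obtain ⟨h1, h2⟩ := hcon
    simp only [Fstr, decide_eq_false_iff_not] at h1 h2
    omega

lemma onesF {m n : ℕ} (hmn : m = 2 * n) {p : ℕ} (hp : p < n) :
    ones (Fstr m p) = n + 1 := by
  have hg : ∀ j : ℕ, j ≤ n → (if j ≤ p then 2 * j else 2 * j - 1) < m := by
    intro j hj; split_ifs <;> omega
  refine card_eq_of_bij _ (fun j : Fin (n + 1) =>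
    ⟨if j.val ≤ p then 2 * j.val else 2 * j.val - 1, hg j.val (by omega)⟩) ?_ ?_ ?_
  · intro j1 j2 hj
    have h1 : j1.val ≤ n := by omega
    have h2 : j2.val ≤ n := by omega
    have hval : (if j1.val ≤ p then 2 * j1.val else 2 * j1.val - 1)
        = (if j2.val ≤ p then 2 * j2.val else 2 * j2.val - 1) := congrArg Fin.val hj
    ext
    split_ifs at hval <;> omega
  · intro j
    simp only [Fstr, decide_eq_true_iff]
    split_ifs <;> omega
  · intro i hi
    simp only [Fstr, decide_eq_true_iff] at hi
    have him : i.val < m := i.isLt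
    by_cases hpar : i.val % 2 = 0
    · have hle : i.val ≤ 2 * p := hi.mp hpar
      refine ⟨⟨i.val / 2, by omega⟩, ?_⟩
      ext
      simp only
      rw [if_pos (by omega)]
      omega
    · have hgt : ¬ (i.val ≤ 2 * p) := fun h => hpar (hi.mpr h)
      refine ⟨⟨(i.val + 1) / 2, by omega⟩, ?_⟩
      ext
      simp only
      rw [if_neg (by omega)]
      omega

lemma lower_and_classify {m n : ℕ} (hm : 2 ≤ m) (hmn : m = 2 * n)
    {b : Fin m → Bool} (hb : Valid m hm b) :
    n + 1 ≤ ones b ∧ (ones b = n + 1 → ∃ p < n, b = Fstr m p) := by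
  obtain ⟨hb0, hbl, hbc⟩ := hb
  have hn : 1 ≤ n := by omega
  -- extend b to ℕ
  set c : ℕ → Bool := fun i => if h : i < m then b ⟨i, h⟩ else true with hc
  have hc0 : c 0 = true := by simp only [hc, dif_pos (show 0 < m by omega)]; exact hb0
  have hcl : c (m - 1) = true := by
    simp only [hc, dif_pos (show m - 1 < m by omega)]; exact hbl
  have hcc : ∀ i, c i = true ∨ c (i + 1) = true := by
    intro i
    by_cases h : i + 1 < m
    · have := hbc i h
      simp only [hc, dif_pos h, dif_pos (show i < m by omega)]
      rcases Bool.eq_false_or_eq_true (b ⟨i, by omega⟩) with h1 | h1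
      · left; exact h1
      · rcases Bool.eq_false_or_eq_true (b ⟨i + 1, h⟩) with h2 | h2
        · right; exact h2
        · exact absurd ⟨h1, h2⟩ this
    · right; simp only [hc, dif_neg (show ¬ (i + 1 < m) from h)]
  have hcval : ∀ i, ∀ h : i < m, b ⟨i, h⟩ = c i := by
    intro i h; simp only [hc, dif_pos h]
  -- the selector function
  set H : ℕ → ℕ := fun k => if k = 0 then 0 else if c (2 * k - 1) = true then 2 * k - 1 else 2 * k
    with hH
  have hHb : ∀ k, 1 ≤ k → 2 * k - 1 ≤ H k ∧ H k ≤ 2 * k := by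
    intro k hk; simp only [hH, if_neg (by omega : ¬ k = 0)]; split_ifs <;> omega
  have hH0 : H 0 = 0 := by simp [hH]
  have hHlt : ∀ k, k ≤ n → H k < m := by
    intro k hk
    rcases Nat.eq_zero_or_pos k with rfl | hk1
    · omega
    simp only [hH, if_neg (by omega : ¬ k = 0)]
    split_ifs with h
    · omega
    · -- c (2k-1) = false, so 2k-1 ≠ m-1, so 2k-1 ≤ m-2
      have : 2 * k - 1 ≠ m - 1 := by
        intro heq; rw [heq] at h; exact h hcl
      omega
  have hHtrue : ∀ k, k ≤ n → c (H k) = true := by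
    intro k hk
    rcases Nat.eq_zero_or_pos k with rfl | hk1
    · rw [hH0]; exact hc0
    simp only [hH, if_neg (by omega : ¬ k = 0)]
    split_ifs with h
    · exact h
    · have := hcc (2 * k - 1)
      rcases this with h1 | h1
      · exact absurd h1 h
      · have : 2 * k - 1 + 1 = 2 * k := by omega
        rwa [this] at h1
  set G : Fin (n + 1) → Fin m := fun k => ⟨H k.val, hHlt k.val (by omega)⟩ with hG
  have hGinj : Function.Injective G := by
    intro k1 k2 hk
    have hval : H k1.val = H k2.val := congrArg Fin.val hk
    rcases Nat.eq_zero_or_pos k1.val with h1 | h1 <;>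
      rcases Nat.eq_zero_or_pos k2.val with h2 | h2
    · ext; omega
    · have := hHb k2.val h2; rw [h1, hH0] at hval; omega
    · have := hHb k1.val h1; rw [h2, hH0] at hval; omega
    · have b1 := hHb k1.val h1; have b2 := hHb k2.val h2; ext; omega
  have hGmem : ∀ k : Fin (n + 1), b (G k) = true := by
    intro k
    rw [hG]
    simp only
    rw [hcval]
    exact hHtrue k.val (by omega)
  -- lower bound
  have hTsub : Finset.image G Finset.univ ⊆ Finset.univ.filter fun i => b i = true := by
    intro i hi
    rw [Finset.mem_image] at hi
    obtain ⟨k, _, rfl⟩ := hi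
    simp only [Finset.mem_filter, Finset.mem_univ, true_and]
    exact hGmem k
  have hlow : n + 1 ≤ ones b := by
    have := Finset.card_le_card hTsub
    rw [Finset.card_image_of_injective _ hGinj, Finset.card_univ, Fintype.card_fin] at this
    simpa [ones] using this
  refine ⟨hlow, ?_⟩
  intro hone
  rw [show ones b = (Finset.univ.filter fun j => b j = true).card from rfl] at hone
  -- equality: the true positions are exactly the image of G
  have hTeq : Finset.univ.filter (fun i => b i = true) = Finset.image G Finset.univ := by
    refine (Finset.eq_of_subset_of_card_le hTsub ?_).symm
    rw [Finset.card_image_of_injective _ hGinj, Finset.card_univ, Fintype.card_fin]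
    omega
  have hsurj : ∀ i : ℕ, ∀ h : i < m, c i = true → ∃ k ≤ n, H k = i := by
    intro i h hci
    have : (⟨i, h⟩ : Fin m) ∈ Finset.univ.filter fun i => b i = true := by
      simp only [Finset.mem_filter, Finset.mem_univ, true_and]
      rw [hcval]; exact hci
    rw [hTeq, Finset.mem_image] at this
    obtain ⟨k, _, hk⟩ := this
    exact ⟨k.val, by omega, congrArg Fin.val hk⟩
  -- characterize even/odd positions
  have heven : ∀ k, 1 ≤ k → k ≤ n - 1 → (c (2 * k) = true ↔ H k = 2 * k) := by
    intro k hk1 hk2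
    constructor
    · intro hck
      obtain ⟨k', hk', hHk'⟩ := hsurj (2 * k) (by omega) hck
      rcases Nat.eq_zero_or_pos k' with rfl | h1
      · rw [hH0] at hHk'; omega
      · have hb' := hHb k' h1
        -- H k' ∈ {2k'-1, 2k'} and = 2k ; parity forces H k' = 2k', so k' = k
        have : k' = k := by
          simp only [hH, if_neg (by omega : ¬ k' = 0)] at hHk'
          split_ifs at hHk' <;> omega
        subst this; exact hHk'
    · intro hHk
      have := hHtrue k (by omega)
      rwa [hHk] at this
  have hodd : ∀ k, 1 ≤ k → k ≤ n → (c (2 * k - 1) = true ↔ H k = 2 * k - 1) := by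
    intro k hk1 hk2
    simp only [hH, if_neg (by omega : ¬ k = 0)]
    split_ifs with h
    · simp [h]
    · simp only [Bool.not_eq_true] at h
      constructor
      · intro hc'; rw [hc'] at h; exact absurd h (by simp)
      · omega
  -- the down-closed set of (0,1) pairs
  set D : Finset ℕ := (Finset.Icc 1 (n - 1)).filter fun k => H k = 2 * k with hD
  have hDsub : D ⊆ Finset.Icc 1 (n - 1) := Finset.filter_subset _ _
  have hstep : ∀ k, 1 ≤ k → k ≤ n - 1 → H k = 2 * k - 1 → H (k + 1) = 2 * (k + 1) - 1 := by
    intro k hk1 hk2 hHk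
    -- c(2k-1) = true, c(2k) = false (else H k = 2k), so c(2k+1) = true
    have hck : c (2 * k) = false := by
      rcases Bool.eq_false_or_eq_true (c (2 * k)) with h | h
      · have := (heven k hk1 hk2).mp h; omega
      · exact h
    have hck1 : c (2 * k + 1) = true := by
      rcases hcc (2 * k) with h | h
      · rw [h] at hck; exact absurd hck (by simp)
      · exact h
    have : 2 * (k + 1) - 1 = 2 * k + 1 := by omega
    rw [← (hodd (k + 1) (by omega) (by omega)), this]
    exact hck1
  have hdc : ∀ j ∈ D, ∀ i, 1 ≤ i → i ≤ j → i ∈ D := by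
    intro j hj i hi1 hij
    have hjconfig := Finset.mem_filter.mp hj
    have hjIcc := Finset.mem_Icc.mp hjconfig.1
    rw [hD, Finset.mem_filter, Finset.mem_Icc]
    refine ⟨⟨hi1, by omega⟩, ?_⟩
    by_contra hne
    -- H i = 2i - 1, propagate to j
    have hHi : H i = 2 * i - 1 := by
      have := hHb i hi1; omega
    have hprop : ∀ d, i + d ≤ j → H (i + d) = 2 * (i + d) - 1 := by
      intro d
      induction d with
      | zero => intro _; simpa using hHi
      | succ d ih =>
        intro hd
        have := hstep (i + d) (by omega) (by omega) (ih (by omega))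
        have heq : i + d + 1 = i + (d + 1) := by omega
        rw [heq] at this
        exact this
    have := hprop (j - i) (by omega)
    have heq : i + (j - i) = j := by omega
    rw [heq] at this
    omega
  have hmemD := downclosed_mem_iff hDsub hdc
  set p : ℕ := D.card with hp
  have hplt : p < n := by
    have := Finset.card_le_card hDsub
    rw [Nat.card_Icc] at this
    omega
  refine ⟨p, hplt, ?_⟩
  -- finally b = Fstr m p
  funext i
  rw [hcval i.val i.isLt]
  have him : i.val < m := i.isLt
  simp only [Fstr]
  by_cases hpar : i.val % 2 = 0
  · -- even position
    rcases Nat.eq_zero_or_pos i.val with h0 | h1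
    · rw [h0, hc0, eq_comm, decide_eq_true_iff]
      constructor <;> intro <;> omega
    · have hik : i.val = 2 * (i.val / 2) := by omega
      set k := i.val / 2 with hk
      have hk1 : 1 ≤ k := by omega
      have hk2 : k ≤ n - 1 := by omega
      have h1 := heven k hk1 hk2
      have h2 := hmemD k hk1
      rcases Bool.eq_false_or_eq_true (c i.val) with hcase | hcase
      · -- c i = true
        rw [hik] at hcase
        have hkD : k ∈ D := by
          rw [hD, Finset.mem_filter, Finset.mem_Icc]
          exact ⟨⟨hk1, hk2⟩, h1.mp hcase⟩
        have hkp : k ≤ p := h2.mp hkD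
        rw [hik, hcase, eq_comm, decide_eq_true_iff]
        omega
      · -- c i = false
        rw [hik] at hcase
        have hknD : ¬ (k ∈ D) := by
          intro hmem
          rw [hD, Finset.mem_filter] at hmem
          have := h1.mpr hmem.2
          rw [this] at hcase
          exact absurd hcase (by simp)
        have hknp : ¬ (k ≤ p) := fun hle => hknD (h2.mpr hle)
        rw [hik, hcase, eq_comm, decide_eq_false_iff_not]
        omega
  · -- odd position
    have hik : i.val = 2 * ((i.val + 1) / 2) - 1 := by omega
    set k := (i.val + 1) / 2 with hk
    have hk1 : 1 ≤ k := by omega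
    have hkn : k ≤ n := by omega
    have h1 := hodd k hk1 hkn
    have h2 := hmemD k hk1
    rcases Bool.eq_false_or_eq_true (c i.val) with hcase | hcase
    · -- c i = true : H k = 2k-1, so k ∉ D, so k > p
      rw [hik] at hcase
      have hHk := h1.mp hcase
      have hknD : ¬ k ∈ D := by
        rw [hD, Finset.mem_filter]
        rintro ⟨-, h⟩
        omega
      have hkp : ¬ k ≤ p := fun hle => hknD (h2.mpr hle)
      rw [hik, hcase, eq_comm, decide_eq_true_iff]
      omega
    · -- c i = false : k ∈ D, so k ≤ p
      rw [hik] at hcase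
      have hHk : H k = 2 * k := by
        have hbnd := hHb k hk1
        rcases Nat.lt_or_ge (H k) (2 * k) with h | h
        · have h' : H k = 2 * k - 1 := by omega
          have := h1.mpr h'
          rw [this] at hcase
          exact absurd hcase (by simp)
        · omega
      have hkn' : k ≤ n - 1 := by
        by_contra hcon
        have hkeq : k = n := by omega
        rw [hkeq] at hcase
        have hml : 2 * n - 1 = m - 1 := by omega
        rw [hml, hcl] at hcase
        exact absurd hcase (by simp)
      have hkD : k ∈ D := by
        rw [hD, Finset.mem_filter, Finset.mem_Icc]
        exact ⟨⟨hk1, hkn'⟩, hHk⟩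
      have hkp : k ≤ p := h2.mp hkD
      rw [hik, hcase, eq_comm, decide_eq_false_iff_not]
      omega

lemma Finj {m n : ℕ} (hmn : m = 2 * n) : Set.InjOn (Fstr m) (Set.Iio n) := by
  have key : ∀ p1 p2, p1 < p2 → p2 < n → Fstr m p1 ≠ Fstr m p2 := by
    intro p1 p2 hlt h2 heq
    have hi : 2 * p1 + 1 < m := by omega
    have := congrFun heq ⟨2 * p1 + 1, hi⟩
    simp only [Fstr, decide_eq_decide] at this
    omega
  intro p1 h1 p2 h2 heq
  simp only [Set.mem_Iio] at h1 h2
  rcases Nat.lt_trichotomy p1 p2 with h | h | h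
  · exact absurd heq (key p1 p2 h h2)
  · exact h
  · exact absurd heq.symm (key p2 p1 h h1)

/-- The number of binary strings of even length `m ≥ 2` with `b_1 = b_m = 1`,
no two consecutive zeros, and the minimum possible number of ones among such
strings, equals `m / 2`. -/
theorem stmt_10 (m : ℕ) (hm : 2 ≤ m) (he : m % 2 = 0) :
    Nat.card {b : Fin m → Bool // Valid m hm b ∧
      ∀ b' : Fin m → Bool, Valid m hm b' → ones b ≤ ones b'} = m / 2 := by
  set n := m / 2 with hn
  have hmn : m = 2 * n := by omega
  have hn1 : 1 ≤ n := by omega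
  have hF0 : Valid m hm (Fstr m 0) := validF hm he (by omega)
  have hF0ones : ones (Fstr m 0) = n + 1 := onesF hmn (by omega)
  have key : {b : Fin m → Bool | Valid m hm b ∧
      ∀ b' : Fin m → Bool, Valid m hm b' → ones b ≤ ones b'} = Fstr m '' Set.Iio n := by
    ext b
    simp only [Set.mem_setOf_eq, Set.mem_image, Set.mem_Iio]
    constructor
    · rintro ⟨hbv, hbmin⟩
      have h1 := (lower_and_classify hm hmn hbv).1
      have h2 := hbmin _ hF0
      obtain ⟨p, hp, hbp⟩ := (lower_and_classify hm hmn hbv).2 (by omega)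
      exact ⟨p, hp, hbp.symm⟩
    · rintro ⟨p, hp, rfl⟩
      have hv : Valid m hm (Fstr m p) := validF hm he (by omega)
      refine ⟨hv, fun b' hb' => ?_⟩
      have := (lower_and_classify hm hmn hb').1
      rw [onesF hmn hp]
      omega
  have : Nat.card {b : Fin m → Bool // Valid m hm b ∧
      ∀ b' : Fin m → Bool, Valid m hm b' → ones b ≤ ones b'}
      = Nat.card ({b : Fin m → Bool | Valid m hm b ∧
      ∀ b' : Fin m → Bool, Valid m hm b' → ones b ≤ ones b'} : Set _) := rfl
  rw [this, key, Nat.card_image_of_injOn (Finj hmn),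
    Nat.card_eq_card_toFinset, Set.toFinset_Iio, Nat.card_Iio]
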